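/- Under the standing assumptions on the 3-block Bregman ADMM, for every k ≥ 1 the iterates satisfy the sufficient-descent inequality L̂(ŵ^{k+1}) ≤ L̂(ŵ^k) − σ₁( ‖x^{k+1}−x^k‖² + ‖y^{k+1}−y^k‖² + ‖z^{k+1}−z^k‖² ). -/

import Mathlib

open RealInnerProductSpace Filter Set Topology

noncomputable section

/-- Euclidean space `ℝ^n`. -/
abbrev Eu (n : ℕ) := EuclideanSpace ℝ (Fin n)

/-- The Bregman distance `Δ_φ(u,v) = φ(u) − φ(v) − ⟨∇φ(v), u−v⟩` associated with a
differentiable function `φ` whose gradient is `φ'`. -/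
def Breg {n : ℕ} (φ : Eu n → ℝ) (φ' : Eu n → Eu n) (u v : Eu n) : ℝ :=
  φ u - φ v - ⟪φ' v, u - v⟫

/-- `F` is `μ`-strongly convex iff `F − (μ/2)‖·‖²` is convex. -/
def StrongConvex {n : ℕ} (μ : ℝ) (F : Eu n → ℝ) : Prop :=
  ConvexOn ℝ Set.univ (fun u => F u - μ / 2 * ‖u‖ ^ 2)

/-- The augmented Lagrangian
`L_α(x,y,z,p) = f(x)+g(y)+h(z)+⟨p, Ax+By+Cz⟩+(α/2)‖Ax+By+Cz‖²`. -/
def Lag {n₁ n₂ n₃ m : ℕ} (f : Eu n₁ → ℝ) (g : Eu n₂ → ℝ) (h : Eu n₃ → ℝ)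
    (A : Eu n₁ →L[ℝ] Eu m) (B : Eu n₂ →L[ℝ] Eu m) (C : Eu n₃ →L[ℝ] Eu m)
    (α : ℝ) (x : Eu n₁) (y : Eu n₂) (z : Eu n₃) (p : Eu m) : ℝ :=
  f x + g y + h z + ⟪p, A x + B y + C z⟫ + α / 2 * ‖A x + B y + C z‖ ^ 2

lemma convex_grad_le {n : ℕ} {φ : Eu n → ℝ} (hc : ConvexOn ℝ Set.univ φ)
    {g v : Eu n} (hg : HasGradientAt φ g v) (u : Eu n) :
    φ v + ⟪g, u - v⟫ ≤ φ u := by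
  set d := u - v with hd
  have h1 : HasDerivAt (fun t : ℝ => v + t • d) d 0 := by
    simpa using ((hasDerivAt_id (0:ℝ)).smul_const d).const_add v
  have hψ : HasDerivAt (fun t : ℝ => φ (v + t • d)) ⟪g, d⟫ 0 := by
    have hF : HasFDerivAt φ ((InnerProductSpace.toDual ℝ (Eu n)) g) (v + (0:ℝ) • d) := by
      simpa using hg.hasFDerivAt
    have h2 := hF.comp_hasDerivAt 0 h1
    simp only [InnerProductSpace.toDual_apply_apply] at h2
    exact h2
  have hslope : ∀ t : ℝ, t ∈ Set.Ioc (0:ℝ) 1 →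
      slope (fun t : ℝ => φ (v + t • d)) 0 t ≤ φ u - φ v := by
    intro t ht
    have hcomb : v + t • d = t • u + (1 - t) • v := by
      rw [hd, smul_sub, sub_smul, one_smul]; abel
    have h := hc.2 (mem_univ u) (mem_univ v) (show (0:ℝ) ≤ t from ht.1.le)
      (show (0:ℝ) ≤ 1 - t from by linarith [ht.2]) (show t + (1 - t) = 1 from by ring)
    rw [← hcomb] at h
    simp only [smul_eq_mul] at h
    rw [slope_def_field]
    simp only [sub_zero]
    rw [div_le_iff₀ ht.1]
    have h0 : φ (v + (0:ℝ) • d) = φ v := by norm_num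
    nlinarith [h, h0]
  have htend : Tendsto (slope (fun t : ℝ => φ (v + t • d)) 0) (𝓝[>] 0) (𝓝 ⟪g, d⟫) := by
    refine (hasDerivAt_iff_tendsto_slope.mp hψ).mono_left (nhdsWithin_mono _ ?_)
    intro t ht
    exact Set.mem_compl_singleton_iff.mpr (ne_of_gt ht)
  have hle : ⟪g, d⟫ ≤ φ u - φ v := by
    refine le_of_tendsto htend ?_
    filter_upwards [Ioc_mem_nhdsGT_of_mem (by norm_num : (0:ℝ) ∈ Set.Ico (0:ℝ) 1)] with t ht
    exact hslope t ht
  linarith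

lemma breg_nonneg {n : ℕ} {φ : Eu n → ℝ} {φ' : Eu n → Eu n}
    (hc : ConvexOn ℝ Set.univ φ) (hg : ∀ v, HasGradientAt φ (φ' v) v) (u v : Eu n) :
    0 ≤ Breg φ φ' u v := by
  have := convex_grad_le hc (hg v) u
  unfold Breg; linarith

lemma breg_strong {n : ℕ} {μ : ℝ} {φ : Eu n → ℝ} {φ' : Eu n → Eu n}
    (hsc : StrongConvex μ φ) (hg : ∀ v, HasGradientAt φ (φ' v) v) (u v : Eu n) :
    μ / 2 * ‖u - v‖ ^ 2 ≤ Breg φ φ' u v := by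
  have hgrad : HasGradientAt (fun u : Eu n => φ u - μ / 2 * ‖u‖ ^ 2) (φ' v - (μ/2 * 2) • v) v := by
    have hn : HasFDerivAt (fun u : Eu n => ‖u‖ ^ 2) (2 • (innerSL ℝ v)) v := by
      simpa using (hasFDerivAt_id v).norm_sq
    have h2 := (hg v).hasFDerivAt.sub (hn.const_mul (μ/2))
    rw [hasGradientAt_iff_hasFDerivAt]
    have e : InnerProductSpace.toDual ℝ (Eu n) (φ' v - (μ/2 * 2) • v)
        = InnerProductSpace.toDual ℝ (Eu n) (φ' v) - (μ / 2) • 2 • (innerSL ℝ) v := by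
      ext w
      simp [InnerProductSpace.toDual_apply_apply, inner_sub_left, real_inner_smul_left]
      ring
    rw [e]
    exact h2
  have hcg := convex_grad_le hsc hgrad u
  have hn1 : ‖u - v‖ ^ 2 = ‖u‖ ^ 2 - 2 * ⟪u, v⟫ + ‖v‖ ^ 2 := norm_sub_sq_real u v
  have hi1 : ⟪φ' v - (μ/2 * 2) • v, u - v⟫
      = ⟪φ' v, u - v⟫ - (μ/2*2) * (⟪u, v⟫ - ‖v‖ ^ 2) := by
    have hv : ⟪v, u - v⟫ = ⟪u, v⟫ - ‖v‖^2 := by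
      rw [inner_sub_right, real_inner_self_eq_norm_sq, real_inner_comm]
    rw [inner_sub_left, real_inner_smul_left, hv]
  rw [hi1] at hcg
  unfold Breg
  have hid : μ/2 * ‖u - v‖^2
      = μ/2 * ‖u‖^2 - μ/2 * ‖v‖^2 - μ/2*2 * (⟪u, v⟫ - ‖v‖^2) := by
    linear_combination (μ/2) * hn1
  linarith [hcg, hid]

lemma strongConvex_min {n : ℕ} {μ : ℝ} {F : Eu n → ℝ} (hsc : StrongConvex μ F) {w : Eu n}
    (hmin : ∀ ξ, F w ≤ F ξ) (u : Eu n) : F w + μ / 2 * ‖u - w‖ ^ 2 ≤ F u := by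
  have hU : StrongConvexOn (Set.univ : Set (Eu n)) μ F := strongConvexOn_iff_convex.mpr hsc
  have key : ∀ a : ℝ, 0 < a → a ≤ 1 → F w + μ/2 * (1-a) * ‖u - w‖^2 ≤ F u := by
    intro a ha ha1
    have h := hU.2 (mem_univ u) (mem_univ w) ha.le (by linarith : (0:ℝ) ≤ 1 - a) (by ring)
    have h2 := hmin (a • u + (1-a) • w)
    simp only [smul_eq_mul] at h
    have h3 : a * (F w + μ/2*(1-a)*‖u - w‖^2) ≤ a * F u := by nlinarith [h, h2]
    exact le_of_mul_le_mul_left h3 ha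
  have htend : Tendsto (fun a : ℝ => F w + μ/2*(1-a)*‖u - w‖^2) (𝓝[>] 0)
      (𝓝 (F w + μ / 2 * ‖u - w‖ ^ 2)) := by
    have hcont : Continuous (fun a : ℝ => F w + μ/2*(1-a)*‖u - w‖^2) := by continuity
    have h0 : Tendsto (fun a : ℝ => F w + μ/2*(1-a)*‖u - w‖^2) (𝓝 0)
        (𝓝 (F w + μ / 2 * ‖u - w‖ ^ 2)) := by
      have := hcont.tendsto 0
      simpa using this
    exact h0.mono_left nhdsWithin_le_nhds
  refine le_of_tendsto htend ?_
  filter_upwards [Ioc_mem_nhdsGT_of_mem (by norm_num : (0:ℝ) ∈ Set.Ico (0:ℝ) 1)] with a ha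
  exact key a ha.1 ha.2

lemma normsq_convexOn {n : ℕ} : ConvexOn ℝ Set.univ (fun u : Eu n => ‖u‖ ^ 2) := by
  have h : StrongConvexOn (Set.univ : Set (Eu n)) 2 (fun u => ‖u‖ ^ 2) := by
    rw [strongConvexOn_iff_convex]
    have : (fun u : Eu n => ‖u‖^2 - 2/2 * ‖u‖^2) = fun _ => (0:ℝ) := by funext u; ring
    rw [this]
    exact convexOn_const _ convex_univ
  exact h.convexOn (fun r => by positivity)

lemma affine_combo {n m : ℕ} (T : Eu n →L[ℝ] Eu m) (c : Eu m) {a b : ℝ} (hab : a + b = 1)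
    (x y : Eu n) : T (a • x + b • y) + c = a • (T x + c) + b • (T y + c) := by
  have h : a • (T x + c) + b • (T y + c) = (a • T x + b • T y) + (a + b) • c := by
    rw [add_smul, smul_add, smul_add]; abel
  rw [h, hab, one_smul, map_add, map_smul, map_smul]

lemma Q_convex {n m : ℕ} (T : Eu n →L[ℝ] Eu m) (c p : Eu m) {α : ℝ} (hα : 0 ≤ α) (q : Eu n) :
    ConvexOn ℝ Set.univ (fun ξ => ⟪p, T ξ + c⟫ + α/2 * ‖T ξ + c‖^2 + ⟪q, ξ⟫) := by
  refine ⟨convex_univ, ?_⟩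
  intro x _ y _ a b ha hb hab
  simp only [smul_eq_mul]
  rw [affine_combo T c hab x y]
  have h1 : ⟪p, a•(T x+c)+b•(T y+c)⟫ = a*⟪p,T x+c⟫ + b*⟪p,T y+c⟫ := by
    rw [inner_add_right, real_inner_smul_right, real_inner_smul_right]
  have h2 : ⟪q, a•x+b•y⟫ = a*⟪q,x⟫+b*⟪q,y⟫ := by
    rw [inner_add_right, real_inner_smul_right, real_inner_smul_right]
  have h3 := normsq_convexOn.2 (mem_univ (T x + c)) (mem_univ (T y + c)) ha hb hab
  simp only [smul_eq_mul] at h3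
  have h4 : α/2 * ‖a•(T x+c)+b•(T y+c)‖^2 ≤ α/2 * (a*‖T x+c‖^2+b*‖T y+c‖^2) :=
    mul_le_mul_of_nonneg_left h3 (by positivity)
  rw [h1, h2]
  nlinarith [h4]

lemma subproblem_descent {n m : ℕ} {μ : ℝ} {F0 : Eu n → ℝ} {φ : Eu n → ℝ} {φ' : Eu n → Eu n}
    (hgφ : ∀ v, HasGradientAt φ (φ' v) v) (hφc : ConvexOn ℝ Set.univ φ)
    (hsc : StrongConvex μ F0 ∨ StrongConvex μ φ)
    (T : Eu n →L[ℝ] Eu m) (c p : Eu m) {α : ℝ} (hα : 0 ≤ α) (v w : Eu n)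
    (hmin : ∀ ξ, F0 w + ⟪p, T w + c⟫ + α/2*‖T w + c‖^2 + Breg φ φ' w v ≤
                 F0 ξ + ⟪p, T ξ + c⟫ + α/2*‖T ξ + c‖^2 + Breg φ φ' ξ v) :
    F0 w + ⟪p, T w + c⟫ + α/2*‖T w + c‖^2 + μ/2 * ‖w - v‖^2 ≤
      F0 v + ⟪p, T v + c⟫ + α/2*‖T v + c‖^2 := by
  have hBvv : Breg φ φ' v v = 0 := by simp [Breg]
  rcases hsc with hsc | hsc
  · set F : Eu n → ℝ := fun ξ => F0 ξ + ⟪p, T ξ + c⟫ + α/2*‖T ξ + c‖^2 + Breg φ φ' ξ v with hF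
    have hscF : StrongConvex μ F := by
      have heq : (fun ξ => F ξ - μ/2*‖ξ‖^2) = fun ξ =>
          (F0 ξ - μ/2*‖ξ‖^2) + ((⟪p, T ξ + c⟫ + α/2*‖T ξ + c‖^2 + ⟪-φ' v, ξ⟫)
            + (φ ξ + (- φ v + ⟪φ' v, v⟫))) := by
        funext ξ
        simp only [hF, Breg, inner_sub_right, inner_neg_left]
        ring
      unfold StrongConvex
      have : (fun u => F u - μ / 2 * ‖u‖ ^ 2) = (fun ξ => F ξ - μ/2*‖ξ‖^2) := rfl
      rw [this, heq]
      exact hsc.add ((Q_convex T c p hα (-φ' v)).add (hφc.add_const _))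
    have hminF : ∀ ξ, F w ≤ F ξ := hmin
    have hkey := strongConvex_min hscF hminF v
    have hBw : 0 ≤ Breg φ φ' w v := breg_nonneg hφc hgφ w v
    have hFv : F v = F0 v + ⟪p, T v + c⟫ + α/2*‖T v + c‖^2 := by rw [hF]; simp [hBvv]
    have hFw : F w = F0 w + ⟪p, T w + c⟫ + α/2*‖T w + c‖^2 + Breg φ φ' w v := rfl
    rw [norm_sub_rev] at hkey
    rw [hFv, hFw] at hkey
    linarith
  · have hB := breg_strong hsc hgφ w v
    have h := hmin v
    rw [hBvv] at h
    linarith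

lemma foc {n m : ℕ} {h φ : Eu n → ℝ} {h' φ' : Eu n → Eu n}
    (hgh : ∀ v, HasGradientAt h (h' v) v) (hgφ : ∀ v, HasGradientAt φ (φ' v) v)
    (C : Eu n →L[ℝ] Eu m) (c p : Eu m) (α : ℝ) (v w : Eu n)
    (hmin : ∀ ξ, h w + ⟪p, C w + c⟫ + α/2*‖C w + c‖^2 + Breg φ φ' w v ≤
                 h ξ + ⟪p, C ξ + c⟫ + α/2*‖C ξ + c‖^2 + Breg φ φ' ξ v) :
    h' w + φ' w - φ' v + (ContinuousLinearMap.adjoint C) (p + α • (C w + c)) = 0 := by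
  set G : Eu n → ℝ := fun ξ => h ξ + ⟪p, C ξ + c⟫ + α/2*‖C ξ + c‖^2 + Breg φ φ' ξ v with hG
  have d1 : HasFDerivAt h (InnerProductSpace.toDual ℝ (Eu n) (h' w)) w := (hgh w).hasFDerivAt
  have d2 : HasFDerivAt (fun ξ : Eu n => ⟪p, C ξ + c⟫) ((innerSL ℝ p).comp C) w := by
    have hbase : HasFDerivAt (fun ξ : Eu n => ⟪p, C ξ⟫ + ⟪p, c⟫) ((innerSL ℝ p).comp C) w :=
      (((innerSL ℝ p).comp C).hasFDerivAt).add_const _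
    have heq : (fun ξ : Eu n => ⟪p, C ξ⟫ + ⟪p, c⟫) = fun ξ : Eu n => ⟪p, C ξ + c⟫ := by
      funext ξ; rw [inner_add_right]
    rwa [heq] at hbase
  have daff : HasFDerivAt (fun ξ : Eu n => C ξ + c) (C : Eu n →L[ℝ] Eu m) w :=
    (C.hasFDerivAt).add_const c
  have d3 : HasFDerivAt (fun ξ : Eu n => α/2 * ‖C ξ + c‖^2)
      ((α/2) • (2 • ((innerSL ℝ (C w + c)).comp C))) w := (daff.norm_sq).const_mul (α/2)
  have d4 : HasFDerivAt (fun ξ : Eu n => Breg φ φ' ξ v)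
      (InnerProductSpace.toDual ℝ (Eu n) (φ' w) - innerSL ℝ (φ' v)) w := by
    have h2 : HasFDerivAt (fun ξ : Eu n => φ v + (⟪φ' v, ξ⟫ - ⟪φ' v, v⟫))
        (innerSL ℝ (φ' v)) w :=
      (((innerSL ℝ (φ' v)).hasFDerivAt).sub_const _).const_add _
    have hb := (hgφ w).hasFDerivAt.sub h2
    have heq : (fun ξ : Eu n => φ ξ - (φ v + (⟪φ' v, ξ⟫ - ⟪φ' v, v⟫)))
        = fun ξ => Breg φ φ' ξ v := by
      funext ξ; rw [Breg, inner_sub_right]; ring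
    rw [← heq]; exact hb
  have dG : HasFDerivAt G
      (InnerProductSpace.toDual ℝ (Eu n) (h' w) + (innerSL ℝ p).comp C
        + (α/2) • (2 • ((innerSL ℝ (C w + c)).comp C))
        + (InnerProductSpace.toDual ℝ (Eu n) (φ' w) - innerSL ℝ (φ' v))) w :=
    ((d1.add d2).add d3).add d4
  have hloc : IsLocalMin G w := Filter.Eventually.of_forall hmin
  have hzero := hloc.hasFDerivAt_eq_zero dG
  have hv : InnerProductSpace.toDual ℝ (Eu n)
      (h' w + φ' w - φ' v + (ContinuousLinearMap.adjoint C) (p + α • (C w + c)))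
      = (InnerProductSpace.toDual ℝ (Eu n) (h' w) + (innerSL ℝ p).comp C
        + (α/2) • (2 • ((innerSL ℝ (C w + c)).comp C))
        + (InnerProductSpace.toDual ℝ (Eu n) (φ' w) - innerSL ℝ (φ' v))) := by
    ext ξ
    simp only [InnerProductSpace.toDual_apply_apply, ContinuousLinearMap.add_apply,
      ContinuousLinearMap.sub_apply, ContinuousLinearMap.smul_apply,
      ContinuousLinearMap.comp_apply, innerSL_apply_apply, smul_eq_mul,
      inner_add_left, inner_sub_left, ContinuousLinearMap.adjoint_inner_left,
      real_inner_smul_left]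
    ring
  have hfinal : InnerProductSpace.toDual ℝ (Eu n)
      (h' w + φ' w - φ' v + (ContinuousLinearMap.adjoint C) (p + α • (C w + c)))
      = InnerProductSpace.toDual ℝ (Eu n) 0 := by
    rw [hv, hzero, map_zero]
  exact (InnerProductSpace.toDual ℝ (Eu n)).injective hfinal

/-- All the data and standing assumptions of the 3-block Bregman ADMM:
objective functions `f, g, h`, Bregman kernels `φ₁, φ₂, φ₃` (with gradients
`φ₁', φ₂', φ₃'`, and `h'` the gradient of `h`), matrices `A, B, C` (as linear maps),
parameters, iterate sequences `x, y, z, p`, and the standing hypotheses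
(lower semicontinuity of `f, g`; differentiability with Lipschitz gradients;
convexity of kernels; the strong-convexity alternatives; quantitative full row rank
of `C`; the lower bound on `α`; and the BADMM update rules, where each of the three
primal updates is a global minimizer of the corresponding subproblem). -/
structure BADMM (n₁ n₂ n₃ m : ℕ) where
  f : Eu n₁ → ℝ
  g : Eu n₂ → ℝ
  h : Eu n₃ → ℝ
  φ₁ : Eu n₁ → ℝ
  φ₂ : Eu n₂ → ℝ
  φ₃ : Eu n₃ → ℝ
  h' : Eu n₃ → Eu n₃
  φ₁' : Eu n₁ → Eu n₁
  φ₂' : Eu n₂ → Eu n₂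
  φ₃' : Eu n₃ → Eu n₃
  A : Eu n₁ →L[ℝ] Eu m
  B : Eu n₂ →L[ℝ] Eu m
  C : Eu n₃ →L[ℝ] Eu m
  α : ℝ
  ℓh : ℝ
  ℓ₁ : ℝ
  ℓ₂ : ℝ
  ℓ₃ : ℝ
  μ₁ : ℝ
  μ₂ : ℝ
  μ₃ : ℝ
  σC : ℝ
  x : ℕ → Eu n₁
  y : ℕ → Eu n₂
  z : ℕ → Eu n₃
  p : ℕ → Eu m
  hα_pos : 0 < α
  hf_lsc : LowerSemicontinuous f
  hg_lsc : LowerSemicontinuous g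
  hgrad_h : ∀ v, HasGradientAt h (h' v) v
  hgrad_φ₁ : ∀ v, HasGradientAt φ₁ (φ₁' v) v
  hgrad_φ₂ : ∀ v, HasGradientAt φ₂ (φ₂' v) v
  hgrad_φ₃ : ∀ v, HasGradientAt φ₃ (φ₃' v) v
  hℓh_nonneg : 0 ≤ ℓh
  hℓ₁_nonneg : 0 ≤ ℓ₁
  hℓ₂_nonneg : 0 ≤ ℓ₂
  hℓ₃_nonneg : 0 ≤ ℓ₃
  hlip_h : ∀ a b, ‖h' a - h' b‖ ≤ ℓh * ‖a - b‖
  hlip_φ₁ : ∀ a b, ‖φ₁' a - φ₁' b‖ ≤ ℓ₁ * ‖a - b‖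
  hlip_φ₂ : ∀ a b, ‖φ₂' a - φ₂' b‖ ≤ ℓ₂ * ‖a - b‖
  hlip_φ₃ : ∀ a b, ‖φ₃' a - φ₃' b‖ ≤ ℓ₃ * ‖a - b‖
  hφ₁_convex : ConvexOn ℝ Set.univ φ₁
  hφ₂_convex : ConvexOn ℝ Set.univ φ₂
  hφ₃_convex : ConvexOn ℝ Set.univ φ₃
  hμ₁_pos : 0 < μ₁
  hμ₂_pos : 0 < μ₂
  hμ₃_pos : 0 < μ₃
  hsc₁ : StrongConvex μ₁ f ∨ StrongConvex μ₁ φ₁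
  hsc₂ : StrongConvex μ₂ g ∨ StrongConvex μ₂ φ₂
  hsc₃ : StrongConvex μ₃ h ∨ StrongConvex μ₃ φ₃
  hσC_pos : 0 < σC
  hC_rank : ∀ u : Eu m, σC * ‖u‖ ^ 2 ≤ ‖(ContinuousLinearMap.adjoint C) u‖ ^ 2
  hα_large : 4 * ((ℓh + ℓ₃) ^ 2 + ℓ₃ ^ 2) / (μ₃ * σC) < α
  hx_min : ∀ k, ∀ ξ : Eu n₁,
    Lag f g h A B C α (x (k+1)) (y k) (z k) (p k) + Breg φ₁ φ₁' (x (k+1)) (x k) ≤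
      Lag f g h A B C α ξ (y k) (z k) (p k) + Breg φ₁ φ₁' ξ (x k)
  hy_min : ∀ k, ∀ ξ : Eu n₂,
    Lag f g h A B C α (x (k+1)) (y (k+1)) (z k) (p k) + Breg φ₂ φ₂' (y (k+1)) (y k) ≤
      Lag f g h A B C α (x (k+1)) ξ (z k) (p k) + Breg φ₂ φ₂' ξ (y k)
  hz_min : ∀ k, ∀ ξ : Eu n₃,
    Lag f g h A B C α (x (k+1)) (y (k+1)) (z (k+1)) (p k) + Breg φ₃ φ₃' (z (k+1)) (z k) ≤
      Lag f g h A B C α (x (k+1)) (y (k+1)) ξ (p k) + Breg φ₃ φ₃' ξ (z k)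
  hp_upd : ∀ k, p (k+1) = p k + α • (A (x (k+1)) + B (y (k+1)) + C (z (k+1)))

namespace BADMM

variable {n₁ n₂ n₃ m : ℕ} (P : BADMM n₁ n₂ n₃ m)

/-- `σ₀ = 2ℓ₃²/(ασ_C)`. -/
def σ0 : ℝ := 2 * P.ℓ₃ ^ 2 / (P.α * P.σC)

/-- `σ₁ = (1/2)·min(μ₁, μ₂, μ₃ − 4(ℓ_h+ℓ₃)²/(ασ_C) − 4ℓ₃²/(ασ_C))`. -/
def σ1 : ℝ :=
  (1 / 2) * min P.μ₁ (min P.μ₂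
    (P.μ₃ - 4 * (P.ℓh + P.ℓ₃) ^ 2 / (P.α * P.σC) - 4 * P.ℓ₃ ^ 2 / (P.α * P.σC)))

/-- The augmented Lagrangian of the problem, `L_α`. -/
def L (x : Eu n₁) (y : Eu n₂) (z : Eu n₃) (p : Eu m) : ℝ :=
  Lag P.f P.g P.h P.A P.B P.C P.α x y z p

/-- `L̂(x,y,z,p,ẑ) = L_α(x,y,z,p) + σ₀‖z−ẑ‖²`. -/
def Lhat (x : Eu n₁) (y : Eu n₂) (z : Eu n₃) (p : Eu m) (zh : Eu n₃) : ℝ :=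
  P.L x y z p + P.σ0 * ‖z - zh‖ ^ 2

/-- `‖w^{k+1}−w^k‖²`. -/
def dw2 (k : ℕ) : ℝ :=
  ‖P.x (k+1) - P.x k‖ ^ 2 + ‖P.y (k+1) - P.y k‖ ^ 2 +
    ‖P.z (k+1) - P.z k‖ ^ 2 + ‖P.p (k+1) - P.p k‖ ^ 2

end BADMM

set_option maxHeartbeats 2000000

/-- sufficient descent of `L̂` along the BADMM iterates. -/
theorem badmm_sufficient_descent {n₁ n₂ n₃ m : ℕ} (P : BADMM n₁ n₂ n₃ m) :
    ∀ k : ℕ, 1 ≤ k →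
      P.Lhat (P.x (k+1)) (P.y (k+1)) (P.z (k+1)) (P.p (k+1)) (P.z k) ≤
        P.Lhat (P.x k) (P.y k) (P.z k) (P.p k) (P.z (k-1)) -
          P.σ1 * (‖P.x (k+1) - P.x k‖ ^ 2 + ‖P.y (k+1) - P.y k‖ ^ 2 +
            ‖P.z (k+1) - P.z k‖ ^ 2) := by
  intro k hk
  obtain ⟨j, rfl⟩ : ∃ j, k = j + 1 := ⟨k - 1, (Nat.succ_pred_eq_of_pos hk).symm⟩
  have hαpos := P.hα_pos
  have hσC := P.hσC_pos
  have hαne : P.α ≠ 0 := ne_of_gt hαpos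
  -- x-descent
  have hxd : Lag P.f P.g P.h P.A P.B P.C P.α (P.x (j+1+1)) (P.y (j+1)) (P.z (j+1)) (P.p (j+1))
      + P.μ₁/2 * ‖P.x (j+1+1) - P.x (j+1)‖^2
      ≤ Lag P.f P.g P.h P.A P.B P.C P.α (P.x (j+1)) (P.y (j+1)) (P.z (j+1)) (P.p (j+1)) := by
    set c := P.B (P.y (j+1)) + P.C (P.z (j+1)) with hc
    have hL : ∀ ξ, Lag P.f P.g P.h P.A P.B P.C P.α ξ (P.y (j+1)) (P.z (j+1)) (P.p (j+1))
        = (P.f ξ + ⟪P.p (j+1), P.A ξ + c⟫ + P.α/2*‖P.A ξ + c‖^2)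
          + (P.g (P.y (j+1)) + P.h (P.z (j+1))) := by
      intro ξ
      have e : P.A ξ + P.B (P.y (j+1)) + P.C (P.z (j+1)) = P.A ξ + c := by rw [hc]; abel
      simp only [Lag]; rw [e]; ring
    have hmin : ∀ ξ, P.f (P.x (j+1+1)) + ⟪P.p (j+1), P.A (P.x (j+1+1)) + c⟫
        + P.α/2*‖P.A (P.x (j+1+1)) + c‖^2 + Breg P.φ₁ P.φ₁' (P.x (j+1+1)) (P.x (j+1))
        ≤ P.f ξ + ⟪P.p (j+1), P.A ξ + c⟫ + P.α/2*‖P.A ξ + c‖^2 + Breg P.φ₁ P.φ₁' ξ (P.x (j+1)) := by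
      intro ξ
      have h := P.hx_min (j+1) ξ
      rw [hL (P.x (j+1+1)), hL ξ] at h
      linarith
    have hsd := subproblem_descent P.hgrad_φ₁ P.hφ₁_convex P.hsc₁ P.A c (P.p (j+1))
      (le_of_lt hαpos) (P.x (j+1)) (P.x (j+1+1)) hmin
    rw [hL (P.x (j+1+1)), hL (P.x (j+1))]
    linarith
  -- y-descent
  have hyd : Lag P.f P.g P.h P.A P.B P.C P.α (P.x (j+1+1)) (P.y (j+1+1)) (P.z (j+1)) (P.p (j+1))
      + P.μ₂/2 * ‖P.y (j+1+1) - P.y (j+1)‖^2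
      ≤ Lag P.f P.g P.h P.A P.B P.C P.α (P.x (j+1+1)) (P.y (j+1)) (P.z (j+1)) (P.p (j+1)) := by
    set c := P.A (P.x (j+1+1)) + P.C (P.z (j+1)) with hc
    have hL : ∀ η, Lag P.f P.g P.h P.A P.B P.C P.α (P.x (j+1+1)) η (P.z (j+1)) (P.p (j+1))
        = (P.g η + ⟪P.p (j+1), P.B η + c⟫ + P.α/2*‖P.B η + c‖^2)
          + (P.f (P.x (j+1+1)) + P.h (P.z (j+1))) := by
      intro η
      have e : P.A (P.x (j+1+1)) + P.B η + P.C (P.z (j+1)) = P.B η + c := by rw [hc]; abel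
      simp only [Lag]; rw [e]; ring
    have hmin : ∀ η, P.g (P.y (j+1+1)) + ⟪P.p (j+1), P.B (P.y (j+1+1)) + c⟫
        + P.α/2*‖P.B (P.y (j+1+1)) + c‖^2 + Breg P.φ₂ P.φ₂' (P.y (j+1+1)) (P.y (j+1))
        ≤ P.g η + ⟪P.p (j+1), P.B η + c⟫ + P.α/2*‖P.B η + c‖^2 + Breg P.φ₂ P.φ₂' η (P.y (j+1)) := by
      intro η
      have h := P.hy_min (j+1) η
      rw [hL (P.y (j+1+1)), hL η] at h
      linarith
    have hsd := subproblem_descent P.hgrad_φ₂ P.hφ₂_convex P.hsc₂ P.B c (P.p (j+1))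
      (le_of_lt hαpos) (P.y (j+1)) (P.y (j+1+1)) hmin
    rw [hL (P.y (j+1+1)), hL (P.y (j+1))]
    linarith
  -- z-descent
  have hzd : Lag P.f P.g P.h P.A P.B P.C P.α (P.x (j+1+1)) (P.y (j+1+1)) (P.z (j+1+1)) (P.p (j+1))
      + P.μ₃/2 * ‖P.z (j+1+1) - P.z (j+1)‖^2
      ≤ Lag P.f P.g P.h P.A P.B P.C P.α (P.x (j+1+1)) (P.y (j+1+1)) (P.z (j+1)) (P.p (j+1)) := by
    set c := P.A (P.x (j+1+1)) + P.B (P.y (j+1+1)) with hc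
    have hL : ∀ ζ, Lag P.f P.g P.h P.A P.B P.C P.α (P.x (j+1+1)) (P.y (j+1+1)) ζ (P.p (j+1))
        = (P.h ζ + ⟪P.p (j+1), P.C ζ + c⟫ + P.α/2*‖P.C ζ + c‖^2)
          + (P.f (P.x (j+1+1)) + P.g (P.y (j+1+1))) := by
      intro ζ
      have e : P.A (P.x (j+1+1)) + P.B (P.y (j+1+1)) + P.C ζ = P.C ζ + c := by rw [hc]; abel
      simp only [Lag]; rw [e]; ring
    have hmin : ∀ ζ, P.h (P.z (j+1+1)) + ⟪P.p (j+1), P.C (P.z (j+1+1)) + c⟫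
        + P.α/2*‖P.C (P.z (j+1+1)) + c‖^2 + Breg P.φ₃ P.φ₃' (P.z (j+1+1)) (P.z (j+1))
        ≤ P.h ζ + ⟪P.p (j+1), P.C ζ + c⟫ + P.α/2*‖P.C ζ + c‖^2 + Breg P.φ₃ P.φ₃' ζ (P.z (j+1)) := by
      intro ζ
      have h := P.hz_min (j+1) ζ
      rw [hL (P.z (j+1+1)), hL ζ] at h
      linarith
    have hsd := subproblem_descent P.hgrad_φ₃ P.hφ₃_convex P.hsc₃ P.C c (P.p (j+1))
      (le_of_lt hαpos) (P.z (j+1)) (P.z (j+1+1)) hmin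
    rw [hL (P.z (j+1+1)), hL (P.z (j+1))]
    linarith
  -- first-order condition
  have hfoc : ∀ i, (ContinuousLinearMap.adjoint P.C) (P.p (i+1))
      = -(P.h' (P.z (i+1)) + P.φ₃' (P.z (i+1)) - P.φ₃' (P.z i)) := by
    intro i
    set c := P.A (P.x (i+1)) + P.B (P.y (i+1)) with hc
    have hL : ∀ ζ, Lag P.f P.g P.h P.A P.B P.C P.α (P.x (i+1)) (P.y (i+1)) ζ (P.p i)
        = (P.h ζ + ⟪P.p i, P.C ζ + c⟫ + P.α/2*‖P.C ζ + c‖^2)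
          + (P.f (P.x (i+1)) + P.g (P.y (i+1))) := by
      intro ζ
      have e : P.A (P.x (i+1)) + P.B (P.y (i+1)) + P.C ζ = P.C ζ + c := by rw [hc]; abel
      simp only [Lag]; rw [e]; ring
    have hmin : ∀ ζ, P.h (P.z (i+1)) + ⟪P.p i, P.C (P.z (i+1)) + c⟫
        + P.α/2*‖P.C (P.z (i+1)) + c‖^2 + Breg P.φ₃ P.φ₃' (P.z (i+1)) (P.z i)
        ≤ P.h ζ + ⟪P.p i, P.C ζ + c⟫ + P.α/2*‖P.C ζ + c‖^2 + Breg P.φ₃ P.φ₃' ζ (P.z i) := by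
      intro ζ
      have h := P.hz_min i ζ
      rw [hL (P.z (i+1)), hL ζ] at h
      linarith
    have h0 := foc P.hgrad_h P.hgrad_φ₃ P.C c (P.p i) P.α (P.z i) (P.z (i+1)) hmin
    have hp : P.p i + P.α • (P.C (P.z (i+1)) + c) = P.p (i+1) := by
      rw [show P.C (P.z (i+1)) + c = P.A (P.x (i+1)) + P.B (P.y (i+1)) + P.C (P.z (i+1)) from by
        rw [hc]; abel]
      exact (P.hp_upd i).symm
    rw [hp] at h0
    exact eq_neg_of_add_eq_zero_right h0
  -- dual-step bound
  set dx2 := ‖P.x (j+1+1) - P.x (j+1)‖^2 with hdx2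
  set dy2 := ‖P.y (j+1+1) - P.y (j+1)‖^2 with hdy2
  set dz2 := ‖P.z (j+1+1) - P.z (j+1)‖^2 with hdz2
  set dzm2 := ‖P.z (j+1) - P.z j‖^2 with hdzm2
  have hdp : P.σC * ‖P.p (j+1+1) - P.p (j+1)‖^2
      ≤ 2*(P.ℓh+P.ℓ₃)^2*dz2 + 2*P.ℓ₃^2*dzm2 := by
    set A1 := P.h' (P.z (j+1+1)) - P.h' (P.z (j+1)) with hA1
    set A2 := P.φ₃' (P.z (j+1+1)) - P.φ₃' (P.z (j+1)) with hA2
    set A3 := P.φ₃' (P.z (j+1)) - P.φ₃' (P.z j) with hA3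
    have hC : (ContinuousLinearMap.adjoint P.C) (P.p (j+1+1) - P.p (j+1)) = -A1 - A2 + A3 := by
      rw [map_sub, hfoc (j+1), hfoc j, hA1, hA2, hA3]; abel
    have hn : ‖(ContinuousLinearMap.adjoint P.C) (P.p (j+1+1) - P.p (j+1))‖
        ≤ (P.ℓh + P.ℓ₃) * ‖P.z (j+1+1) - P.z (j+1)‖ + P.ℓ₃ * ‖P.z (j+1) - P.z j‖ := by
      rw [hC]
      have t1 : ‖-A1 - A2 + A3‖ ≤ ‖A1‖ + ‖A2‖ + ‖A3‖ := by
        calc ‖-A1 - A2 + A3‖ ≤ ‖-A1 - A2‖ + ‖A3‖ := norm_add_le _ _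
          _ = ‖A1 + A2‖ + ‖A3‖ := by rw [show -A1 - A2 = -(A1 + A2) from by abel, norm_neg]
          _ ≤ ‖A1‖ + ‖A2‖ + ‖A3‖ := by linarith [norm_add_le A1 A2]
      have b1 := P.hlip_h (P.z (j+1+1)) (P.z (j+1))
      have b2 := P.hlip_φ₃ (P.z (j+1+1)) (P.z (j+1))
      have b3 := P.hlip_φ₃ (P.z (j+1)) (P.z j)
      rw [hA1, hA2, hA3] at t1
      linarith [t1, b1, b2, b3]
    have hrk := P.hC_rank (P.p (j+1+1) - P.p (j+1))
    have hsq : ‖(ContinuousLinearMap.adjoint P.C) (P.p (j+1+1) - P.p (j+1))‖^2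
        ≤ ((P.ℓh + P.ℓ₃) * ‖P.z (j+1+1) - P.z (j+1)‖ + P.ℓ₃ * ‖P.z (j+1) - P.z j‖)^2 :=
      pow_le_pow_left₀ (norm_nonneg _) hn 2
    have hexp : ((P.ℓh + P.ℓ₃) * ‖P.z (j+1+1) - P.z (j+1)‖ + P.ℓ₃ * ‖P.z (j+1) - P.z j‖)^2
        ≤ 2*(P.ℓh+P.ℓ₃)^2*dz2 + 2*P.ℓ₃^2*dzm2 := by
      rw [hdz2, hdzm2]
      nlinarith [sq_nonneg ((P.ℓh + P.ℓ₃) * ‖P.z (j+1+1) - P.z (j+1)‖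
        - P.ℓ₃ * ‖P.z (j+1) - P.z j‖)]
    linarith
  -- p-update identity
  set r := P.A (P.x (j+1+1)) + P.B (P.y (j+1+1)) + P.C (P.z (j+1+1)) with hrr
  have hΔp : P.p (j+1+1) - P.p (j+1) = P.α • r := by
    rw [P.hp_upd (j+1)]; abel
  have hD : ‖P.p (j+1+1) - P.p (j+1)‖^2 = P.α^2 * ‖r‖^2 := by
    rw [hΔp, norm_smul, Real.norm_eq_abs, abs_of_pos hαpos, mul_pow]
  have hpstep : Lag P.f P.g P.h P.A P.B P.C P.α (P.x (j+1+1)) (P.y (j+1+1)) (P.z (j+1+1)) (P.p (j+1+1))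
      = Lag P.f P.g P.h P.A P.B P.C P.α (P.x (j+1+1)) (P.y (j+1+1)) (P.z (j+1+1)) (P.p (j+1))
        + P.α * ‖r‖^2 := by
    simp only [Lag, ← hrr]
    rw [P.hp_upd (j+1), ← hrr, inner_add_left, real_inner_smul_left,
      real_inner_self_eq_norm_sq]
    ring
  -- bound α‖r‖²
  have hrb : P.α * ‖r‖^2 ≤ 2*((P.ℓh+P.ℓ₃)^2/(P.α*P.σC))*dz2 + 2*(P.ℓ₃^2/(P.α*P.σC))*dzm2 := by
    have hprod : 0 < P.α * P.σC := mul_pos hαpos hσC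
    rw [hD] at hdp
    have h1 : P.α * ‖r‖^2 = (P.σC * (P.α^2 * ‖r‖^2)) / (P.α * P.σC) := by
      field_simp
    rw [h1, div_le_iff₀ hprod]
    calc P.σC * (P.α ^ 2 * ‖r‖ ^ 2) ≤ 2*(P.ℓh+P.ℓ₃)^2*dz2 + 2*P.ℓ₃^2*dzm2 := hdp
      _ = (2*((P.ℓh+P.ℓ₃)^2/(P.α*P.σC))*dz2 + 2*(P.ℓ₃^2/(P.α*P.σC))*dzm2) * (P.α*P.σC) := by
        field_simp
  -- final assembly
  simp only [BADMM.Lhat, BADMM.L, BADMM.σ0, BADMM.σ1, Nat.add_sub_cancel]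
  set M := min P.μ₁ (min P.μ₂
    (P.μ₃ - 4 * (P.ℓh + P.ℓ₃) ^ 2 / (P.α * P.σC) - 4 * P.ℓ₃ ^ 2 / (P.α * P.σC))) with hM
  have hMx : M * dx2 ≤ P.μ₁ * dx2 :=
    mul_le_mul_of_nonneg_right (min_le_left _ _) (by rw [hdx2]; positivity)
  have hMy : M * dy2 ≤ P.μ₂ * dy2 :=
    mul_le_mul_of_nonneg_right ((min_le_right _ _).trans (min_le_left _ _))
      (by rw [hdy2]; positivity)
  have hMz : M * dz2 ≤ (P.μ₃ - 4 * (P.ℓh + P.ℓ₃) ^ 2 / (P.α * P.σC)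
      - 4 * P.ℓ₃ ^ 2 / (P.α * P.σC)) * dz2 :=
    mul_le_mul_of_nonneg_right ((min_le_right _ _).trans (min_le_right _ _))
      (by rw [hdz2]; positivity)
  rw [← hdz2, ← hdzm2]
  ring_nf at hxd hyd hzd hpstep hrb hMx hMy hMz ⊢
  linarith [hxd, hyd, hzd, hpstep, hrb, hMx, hMy, hMz]
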